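/- For every real number σ > 1 there exists a constant C_σ > 0 such that for every integer n ≥ 1 one has ∑_{m ∈ ℤ, |m| ≠ n} 1/|m² − n²|^σ ≤ C_σ / n^σ. -/

import Mathlib

open Finset

lemma aux_key (σ : ℝ) (hσ : 1 < σ) (n : ℕ) (hn : 1 ≤ n) (k : ℕ) :
    1 / |((k : ℝ)) ^ 2 - (n : ℝ) ^ 2| ^ σ ≤
      (1 / (n : ℝ) ^ σ) * (1 / |(k : ℝ) - (n : ℝ)| ^ σ) := by
  have hσ0 : σ ≠ 0 := by positivity
  rcases eq_or_ne k n with rfl | hk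
  · simp [Real.zero_rpow hσ0]
  · have hkn : (k : ℝ) ≠ (n : ℝ) := by exact_mod_cast fun h => hk (Nat.cast_injective h)
    have hd : 0 < |(k : ℝ) - n| := abs_pos.mpr (sub_ne_zero.mpr hkn)
    have hnpos : (0:ℝ) < n := by exact_mod_cast hn
    have hfac : |(k : ℝ) ^ 2 - (n : ℝ) ^ 2| = |(k : ℝ) - n| * ((k : ℝ) + n) := by
      have : (k : ℝ) ^ 2 - (n : ℝ) ^ 2 = ((k:ℝ) - n) * ((k:ℝ) + n) := by ring
      rw [this, abs_mul, abs_of_nonneg (by positivity : (0:ℝ) ≤ (k:ℝ) + n)]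
    have h1 : |(k : ℝ) - n| * (n : ℝ) ≤ |(k : ℝ) ^ 2 - (n : ℝ) ^ 2| := by
      rw [hfac]
      have : (n : ℝ) ≤ (k : ℝ) + n := le_add_of_nonneg_left (by positivity)
      nlinarith [hd.le]
    have h2 : (|(k : ℝ) - n| * (n : ℝ)) ^ σ ≤ |(k : ℝ) ^ 2 - (n : ℝ) ^ 2| ^ σ :=
      Real.rpow_le_rpow (by positivity) h1 (by positivity)
    have h3 : (0:ℝ) < (|(k : ℝ) - n| * (n : ℝ)) ^ σ := Real.rpow_pos_of_pos (by positivity) _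
    calc 1 / |((k : ℝ)) ^ 2 - (n : ℝ) ^ 2| ^ σ ≤ 1 / (|(k : ℝ) - n| * (n : ℝ)) ^ σ :=
          one_div_le_one_div_of_le h3 h2
      _ = (1 / (n : ℝ) ^ σ) * (1 / |(k : ℝ) - (n : ℝ)| ^ σ) := by
          rw [Real.mul_rpow hd.le hnpos.le]; field_simp

/-- For every real `σ > 1` there is a constant `C_σ > 0` such that for every integer `n ≥ 1`,
`∑_{m ∈ ℤ, |m| ≠ n} 1/|m² − n²|^σ ≤ C_σ / n^σ`. -/
theorem stmt_2 (σ : ℝ) (hσ : 1 < σ) :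
    ∃ C : ℝ, 0 < C ∧ ∀ n : ℕ, 1 ≤ n →
      Summable (fun m : {m : ℤ // m.natAbs ≠ n} =>
        1 / |((m : ℤ) : ℝ) ^ 2 - (n : ℝ) ^ 2| ^ σ) ∧
      (∑' m : {m : ℤ // m.natAbs ≠ n}, 1 / |((m : ℤ) : ℝ) ^ 2 - (n : ℝ) ^ 2| ^ σ)
        ≤ C / (n : ℝ) ^ σ := by
  set Z : ℝ := ∑' k : ℕ, 1 / (k : ℝ) ^ σ with hZdef
  have hZsum : Summable (fun k : ℕ => 1 / (k : ℝ) ^ σ) := by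
    simpa using Real.summable_one_div_nat_rpow.mpr (by linarith)
  have hZpos : 0 < Z := by
    have h1 : (1:ℝ) = 1 / ((1:ℕ) : ℝ) ^ σ := by simp
    have := Summable.tsum_pos hZsum (fun k => by positivity) 1 (by rw [← h1]; norm_num)
    exact this
  refine ⟨4 * Z, by positivity, fun n hn => ?_⟩
  have hnpos : (0:ℝ) < n := by exact_mod_cast hn
  -- the function on ℕ
  set f : ℕ → ℝ := fun k => 1 / |((k : ℝ)) ^ 2 - (n : ℝ) ^ 2| ^ σ with hf
  set g : ℕ → ℝ := fun k => 1 / |(k : ℝ) - (n : ℝ)| ^ σ with hg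
  have hgsum : Summable g := by
    rw [← summable_nat_add_iff n]
    have : (fun k : ℕ => g (k + n)) = fun k : ℕ => 1 / (k : ℝ) ^ σ := by
      funext k
      simp only [hg]
      have : ((k + n : ℕ) : ℝ) - (n : ℝ) = (k : ℝ) := by push_cast; ring
      rw [this, abs_of_nonneg (by positivity)]
    rw [this]; exact hZsum
  have hfsum : Summable f :=
    Summable.of_nonneg_of_le (fun k => by positivity)
      (fun k => aux_key σ hσ n hn k) (hgsum.mul_left (1 / (n:ℝ) ^ σ))
  -- bound on tsum g
  have hg_tail : (fun k : ℕ => g (k + n)) = fun k : ℕ => 1 / (k : ℝ) ^ σ := by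
    funext k
    simp only [hg]
    have : ((k + n : ℕ) : ℝ) - (n : ℝ) = (k : ℝ) := by push_cast; ring
    rw [this, abs_of_nonneg (by positivity)]
  have hgsplit : (∑' k, g k) = (∑ k ∈ range n, g k) + Z := by
    rw [← Summable.sum_add_tsum_nat_add n hgsum]
    congr 1
    rw [hZdef, ← hg_tail]
  have hhead : (∑ k ∈ range n, g k) ≤ Z := by
    have hre : (∑ k ∈ range n, g k) = ∑ j ∈ range n, 1 / ((j + 1 : ℕ) : ℝ) ^ σ := by
      rw [← Finset.sum_range_reflect (fun k => g k) n]
      apply Finset.sum_congr rfl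
      intro j hj
      have hj' : j < n := Finset.mem_range.mp hj
      simp only [hg]
      have h0 : ((n - 1 - j : ℕ) : ℝ) = (n : ℝ) - ((j : ℝ) + 1) := by
        have he : n - 1 - j = n - (j + 1) := by omega
        rw [he, Nat.cast_sub (by omega)]; push_cast; ring
      have h1 : ((n - 1 - j : ℕ) : ℝ) - (n : ℝ) = -((j + 1 : ℕ) : ℝ) := by
        rw [h0]; push_cast; ring
      rw [h1, abs_neg, abs_of_nonneg (by positivity)]
    rw [hre]
    have hsum1 : Summable (fun j : ℕ => 1 / ((j + 1 : ℕ) : ℝ) ^ σ) := by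
      exact_mod_cast (summable_nat_add_iff 1).mpr hZsum
    have hle1 : (∑ j ∈ range n, 1 / ((j + 1 : ℕ) : ℝ) ^ σ)
        ≤ ∑' j : ℕ, 1 / ((j + 1 : ℕ) : ℝ) ^ σ :=
      Summable.sum_le_tsum _ (fun k _ => by positivity) hsum1
    have hZ0 : Z = (1 / ((0:ℕ) : ℝ) ^ σ) + ∑' j : ℕ, 1 / ((j + 1 : ℕ) : ℝ) ^ σ := by
      rw [hZdef]
      exact_mod_cast Summable.tsum_eq_zero_add hZsum
    have h00 : (1 / ((0:ℕ) : ℝ) ^ σ) = 0 := by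
      simp [Real.zero_rpow (by positivity : σ ≠ 0)]
    rw [hZ0, h00, zero_add]
    exact hle1
  have hgZ : (∑' k, g k) ≤ 2 * Z := by rw [hgsplit]; linarith
  have hfZ : (∑' k, f k) ≤ (1 / (n:ℝ) ^ σ) * (2 * Z) := by
    calc (∑' k, f k) ≤ ∑' k, (1 / (n:ℝ) ^ σ) * g k :=
          Summable.tsum_le_tsum (fun k => aux_key σ hσ n hn k) hfsum (hgsum.mul_left _)
      _ = (1 / (n:ℝ) ^ σ) * ∑' k, g k := tsum_mul_left
      _ ≤ (1 / (n:ℝ) ^ σ) * (2 * Z) := by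
          apply mul_le_mul_of_nonneg_left hgZ (by positivity)
  -- the function on ℤ
  set F : ℤ → ℝ := fun m => 1 / |((m : ℤ) : ℝ) ^ 2 - (n : ℝ) ^ 2| ^ σ with hF
  have hFnat : ∀ m : ℤ, F m = f m.natAbs := by
    intro m
    simp only [hF, hf, Nat.cast_natAbs, Int.cast_abs, sq_abs]
  have hFpos : (fun k : ℕ => F k) = f := by
    funext k; rw [hFnat]; simp
  have hFneg : (fun k : ℕ => F (-(k + 1))) = fun k => f (k + 1) := by
    funext k; rw [hFnat]; congr 1
  have hFsum : Summable F := by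
    apply Summable.of_nat_of_neg_add_one
    · rw [hFpos]; exact hfsum
    · rw [hFneg]; exact (summable_nat_add_iff 1).mpr hfsum
  have hFtsum : (∑' m : ℤ, F m) ≤ 2 * ((1 / (n:ℝ) ^ σ) * (2 * Z)) := by
    rw [tsum_of_nat_of_neg_add_one (by rw [hFpos]; exact hfsum)
      (by rw [hFneg]; exact (summable_nat_add_iff 1).mpr hfsum), hFpos, hFneg]
    have h2 : (∑' k : ℕ, f (k + 1)) ≤ ∑' k, f k :=
      Summable.tsum_le_tsum_of_inj (fun k => k + 1) (add_left_injective 1)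
        (fun c _ => by positivity) (fun k => le_refl _)
        ((summable_nat_add_iff 1).mpr hfsum) hfsum
    linarith
  have hsubsum : Summable (fun m : {m : ℤ // m.natAbs ≠ n} => F (m : ℤ)) :=
    hFsum.subtype _
  refine ⟨hsubsum, ?_⟩
  have hle : (∑' m : {m : ℤ // m.natAbs ≠ n}, F (m : ℤ)) ≤ ∑' m : ℤ, F m :=
    Summable.tsum_le_tsum_of_inj (Subtype.val) Subtype.val_injective
      (fun c _ => by positivity) (fun m => le_refl _) hsubsum hFsum
  calc (∑' m : {m : ℤ // m.natAbs ≠ n}, F (m : ℤ)) ≤ ∑' m : ℤ, F m := hle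
    _ ≤ 2 * ((1 / (n:ℝ) ^ σ) * (2 * Z)) := hFtsum
    _ = 4 * Z / (n : ℝ) ^ σ := by field_simp; ring
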